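/- Let G = ([n], E) be a connected finite simple graph and k a field. Then in k[x_1,…,x_n] the tree ideal satisfies T_G = ⋂_{O} ⟨ x_i^{outdeg_O(i)+1} : i ∈ [n] ⟩, where the intersection runs over all acyclic orientations O of G. -/

import Mathlib

open MvPolynomial

/-- `O` is an orientation of `G`. -/
def IsOrientation {V : Type*} (G : SimpleGraph V) (O : V → V → Prop) : Prop :=
  (∀ u v, O u v → G.Adj u v) ∧ ∀ u v, G.Adj u v → (O u v ↔ ¬ O v u)

/-- The relation `O` has no directed cycles. -/
def IsAcyclicRel {V : Type*} (O : V → V → Prop) : Prop :=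
  ∀ v, ¬ Relation.TransGen O v v

/-- Out-degree of a vertex with respect to an orientation. -/
noncomputable def outDeg {V : Type*} (O : V → V → Prop) (i : V) : ℕ :=
  {j : V | O i j}.ncard

/-- `dout_σ(i)`: the number of neighbors of `i` outside of `σ`. -/
noncomputable def doutDeg {n : ℕ} (G : SimpleGraph (Fin n)) (σ : Finset (Fin n)) (i : Fin n) :
    ℕ :=
  {j : Fin n | j ∉ σ ∧ G.Adj i j}.ncard

/-- The tree ideal of `G`, generated by the monomials `∏_{i∈σ} x_i ^ (dout_σ(i)+1)`
over nonempty `σ ⊆ [n]` with `G[σ]` connected. -/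
noncomputable def treeIdeal (n : ℕ) (G : SimpleGraph (Fin n)) (K : Type*) [Field K] :
    Ideal (MvPolynomial (Fin n) K) :=
  Ideal.span {f | ∃ σ : Finset (Fin n), σ.Nonempty ∧
    (G.induce (↑σ : Set (Fin n))).Connected ∧
    f = ∏ i ∈ σ, (X i : MvPolynomial (Fin n) K) ^ (doutDeg G σ i + 1)}

/-! ### Auxiliary lemmas -/

lemma sum_single_le_iff {n : ℕ} (σ : Finset (Fin n)) (e : Fin n → ℕ) (d : Fin n →₀ ℕ) :
    (∑ i ∈ σ, Finsupp.single i (e i)) ≤ d ↔ ∀ i ∈ σ, e i ≤ d i := by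
  rw [Finsupp.le_def]
  have hj : ∀ j, (∑ i ∈ σ, Finsupp.single i (e i)) j = if j ∈ σ then e j else 0 := by
    intro j
    rw [Finsupp.finset_sum_apply]
    simp [Finsupp.single_apply]
  constructor
  · intro h i hi
    have := h i
    rwa [hj, if_pos hi] at this
  · intro h j
    rw [hj]
    split
    · exact h j ‹_›
    · exact Nat.zero_le _

lemma prod_X_pow_eq_monomial' {n : ℕ} {K : Type*} [Field K] (σ : Finset (Fin n)) (e : Fin n → ℕ) :
    ∏ i ∈ σ, (X i : MvPolynomial (Fin n) K) ^ e i
      = monomial (∑ i ∈ σ, Finsupp.single i (e i)) 1 := by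
  induction σ using Finset.induction with
  | empty => simp
  | insert _ _ h ih =>
      rw [Finset.prod_insert h, Finset.sum_insert h, ih, X_pow_eq_monomial, monomial_mul, one_mul]

lemma mem_treeIdeal_iff {n : ℕ} (G : SimpleGraph (Fin n)) {K : Type*} [Field K]
    (p : MvPolynomial (Fin n) K) :
    p ∈ treeIdeal n G K ↔ ∀ d ∈ p.support, ∃ σ : Finset (Fin n), σ.Nonempty ∧
      (G.induce (↑σ : Set (Fin n))).Connected ∧ ∀ i ∈ σ, doutDeg G σ i + 1 ≤ d i := by
  have himg : {f | ∃ σ : Finset (Fin n), σ.Nonempty ∧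
      (G.induce (↑σ : Set (Fin n))).Connected ∧
      f = ∏ i ∈ σ, (X i : MvPolynomial (Fin n) K) ^ (doutDeg G σ i + 1)}
      = (fun s => monomial s (1 : K)) ''
        {s | ∃ σ : Finset (Fin n), σ.Nonempty ∧ (G.induce (↑σ : Set (Fin n))).Connected ∧
          s = ∑ i ∈ σ, Finsupp.single i (doutDeg G σ i + 1)} := by
    ext f
    constructor
    · rintro ⟨σ, h1, h2, rfl⟩
      exact ⟨_, ⟨σ, h1, h2, rfl⟩, (prod_X_pow_eq_monomial' σ _).symm⟩
    · rintro ⟨s, ⟨σ, h1, h2, rfl⟩, rfl⟩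
      exact ⟨σ, h1, h2, (prod_X_pow_eq_monomial' σ _).symm⟩
  rw [treeIdeal, himg, mem_ideal_span_monomial_image]
  refine forall₂_congr fun d hd => ?_
  constructor
  · rintro ⟨s, ⟨σ, h1, h2, rfl⟩, hle⟩
    exact ⟨σ, h1, h2, (sum_single_le_iff σ _ d).1 hle⟩
  · rintro ⟨σ, h1, h2, hle⟩
    exact ⟨_, ⟨σ, h1, h2, rfl⟩, (sum_single_le_iff σ _ d).2 hle⟩

lemma mem_orient_iff {n : ℕ} {K : Type*} [Field K] (O : Fin n → Fin n → Prop)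
    (p : MvPolynomial (Fin n) K) :
    p ∈ Ideal.span (Set.range fun i : Fin n =>
        (X i : MvPolynomial (Fin n) K) ^ (outDeg O i + 1)) ↔
      ∀ d ∈ p.support, ∃ i, outDeg O i + 1 ≤ d i := by
  have himg : (Set.range fun i : Fin n => (X i : MvPolynomial (Fin n) K) ^ (outDeg O i + 1))
      = (fun s => monomial s (1 : K)) ''
        (Set.range fun i : Fin n => Finsupp.single i (outDeg O i + 1)) := by
    rw [← Set.range_comp]
    refine congrArg _ (funext fun i => ?_)
    simp [Function.comp, X_pow_eq_monomial]
  rw [himg, mem_ideal_span_monomial_image]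
  refine forall₂_congr fun d hd => ?_
  constructor
  · rintro ⟨s, ⟨i, rfl⟩, hle⟩
    exact ⟨i, Finsupp.single_le_iff.1 hle⟩
  · rintro ⟨i, hle⟩
    exact ⟨_, ⟨i, rfl⟩, Finsupp.single_le_iff.2 hle⟩

lemma aux_rank {n : ℕ} (G : SimpleGraph (Fin n)) (m : Fin n → ℕ)
    (H : ∀ σ : Finset (Fin n), σ.Nonempty → (G.induce (↑σ : Set (Fin n))).Connected →
      ∃ i ∈ σ, m i ≤ doutDeg G σ i) :
    ∀ U : Finset (Fin n), ∃ rank : Fin n → ℕ, Set.InjOn rank ↑U ∧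
      ∀ i ∈ U, m i ≤ {j | G.Adj i j ∧ (j ∉ U ∨ (j ∈ U ∧ rank j < rank i))}.ncard := by
  intro U
  induction U using Finset.strongInduction with
  | _ U ih =>
    classical
    rcases U.eq_empty_or_nonempty with rfl | ⟨u, hu⟩
    · exact ⟨fun _ => 0, by simp, by simp⟩
    -- the component of u in G[U]
    set R : Fin n → Fin n → Prop := fun a b => a ∈ U ∧ b ∈ U ∧ G.Adj a b with hR
    set σ : Finset (Fin n) := U.filter (fun j => Relation.ReflTransGen R u j) with hσ
    have hmem : ∀ j, j ∈ σ ↔ j ∈ U ∧ Relation.ReflTransGen R u j := by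
      intro j; simp [hσ]
    have huσ : u ∈ σ := (hmem u).2 ⟨hu, Relation.ReflTransGen.refl⟩
    have huσ' : u ∈ (↑σ : Set (Fin n)) := huσ
    have hreach : ∀ j, Relation.ReflTransGen R u j → ∀ hj : j ∈ (↑σ : Set (Fin n)),
        (G.induce (↑σ : Set (Fin n))).Reachable ⟨u, huσ'⟩ ⟨j, hj⟩ := by
      intro j h
      induction h with
      | refl => intro hj; exact SimpleGraph.Reachable.refl _
      | tail hub hbc ihr =>
        intro hj
        have hb : _ ∈ (↑σ : Set (Fin n)) := (hmem _).2 ⟨hbc.1, hub⟩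
        have hadj : (G.induce (↑σ : Set (Fin n))).Adj ⟨_, hb⟩ ⟨_, hj⟩ := by
          simpa using hbc.2.2
        exact (ihr hb).trans hadj.reachable
    have hconn : (G.induce (↑σ : Set (Fin n))).Connected := by
      rw [SimpleGraph.connected_iff_exists_forall_reachable]
      refine ⟨⟨u, huσ'⟩, fun b => ?_⟩
      exact hreach b ((hmem b).1 (by exact_mod_cast b.2)).2 b.2
    obtain ⟨i₀, hi₀σ, hmi₀⟩ := H σ ⟨u, huσ⟩ hconn
    have hi₀U : i₀ ∈ U := ((hmem i₀).1 hi₀σ).1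
    have hkey : m i₀ ≤ {j : Fin n | j ∉ U ∧ G.Adj i₀ j}.ncard := by
      refine hmi₀.trans (Set.ncard_le_ncard ?_ (Set.toFinite _))
      rintro j ⟨hjσ, hadj⟩
      refine ⟨fun hjU => hjσ ?_, hadj⟩
      exact (hmem j).2 ⟨hjU, ((hmem i₀).1 hi₀σ).2.tail ⟨hi₀U, hjU, hadj⟩⟩
    -- recurse on U.erase i₀
    obtain ⟨rank', hinj', hcond'⟩ := ih (U.erase i₀) (Finset.erase_ssubset hi₀U)
    refine ⟨fun j => if j = i₀ then 0 else rank' j + 1, ?_, ?_⟩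
    · intro a ha b hb hab
      by_cases hai : a = i₀ <;> by_cases hbi : b = i₀
      · exact hai.trans hbi.symm
      · simp [hai, hbi] at hab
      · simp [hai, hbi] at hab
      · simp only [if_neg hai, if_neg hbi, Nat.add_right_cancel_iff] at hab
        exact hinj' (by simp [Finset.mem_erase, hai]; exact ha)
          (by simp [Finset.mem_erase, hbi]; exact hb) hab
    · intro i hiU
      by_cases hii : i = i₀
      · subst hii
        refine hkey.trans (Set.ncard_le_ncard ?_ (Set.toFinite _))
        rintro j ⟨hjU, hadj⟩
        exact ⟨hadj, Or.inl hjU⟩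
      · have := hcond' i (Finset.mem_erase.2 ⟨hii, hiU⟩)
        refine this.trans (Set.ncard_le_ncard ?_ (Set.toFinite _))
        rintro j ⟨hadj, hc⟩
        refine ⟨hadj, ?_⟩
        rcases hc with hc | ⟨hjU', hlt⟩
        · by_cases hjU : j ∈ U
          · have hji : j = i₀ := by
              by_contra hji
              exact hc (Finset.mem_erase.2 ⟨hji, hjU⟩)
            refine Or.inr ⟨hjU, ?_⟩
            simp [hji, hii]
          · exact Or.inl hjU
        · have hjU : j ∈ U := Finset.mem_of_mem_erase hjU'
          have hji : j ≠ i₀ := (Finset.mem_erase.1 hjU').1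
          refine Or.inr ⟨hjU, ?_⟩
          simp only [if_neg hji, if_neg hii]
          omega

/-- The key combinatorial equivalence on exponent vectors. -/
lemma key_iff {n : ℕ} (G : SimpleGraph (Fin n)) (d : Fin n →₀ ℕ) :
    (∃ σ : Finset (Fin n), σ.Nonempty ∧ (G.induce (↑σ : Set (Fin n))).Connected ∧
        ∀ i ∈ σ, doutDeg G σ i + 1 ≤ d i) ↔
      ∀ O : Fin n → Fin n → Prop, IsOrientation G O → IsAcyclicRel O →
        ∃ i, outDeg O i + 1 ≤ d i := by
  constructor
  · rintro ⟨σ, hne, hconn, hcond⟩ O hor hac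
    -- find a sink of O inside σ
    set r : Fin n → Fin n → Prop := fun a b => Relation.TransGen O b a with hr
    have htrans : IsTrans (Fin n) r := ⟨fun a b c hab hbc => hbc.trans hab⟩
    have hirr : IsIrrefl (Fin n) r := ⟨fun a h => hac a h⟩
    have hwf : WellFounded r := Finite.wellFounded_of_trans_of_irrefl r
    obtain ⟨a, haσ, hamax⟩ := hwf.has_min (↑σ : Set (Fin n)) ⟨hne.choose, hne.choose_spec⟩
    have hsub : {j : Fin n | O a j} ⊆ {j : Fin n | j ∉ σ ∧ G.Adj a j} := by
      intro j hj
      refine ⟨fun hjσ => hamax j hjσ (Relation.TransGen.single hj), hor.1 a j hj⟩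
    have : outDeg O a ≤ doutDeg G σ a := Set.ncard_le_ncard hsub (Set.toFinite _)
    exact ⟨a, le_trans (by omega) (hcond a haσ)⟩
  · intro h
    by_contra hno
    push_neg at hno
    have H : ∀ σ : Finset (Fin n), σ.Nonempty → (G.induce (↑σ : Set (Fin n))).Connected →
        ∃ i ∈ σ, d i ≤ doutDeg G σ i := by
      intro σ h1 h2
      obtain ⟨i, hiσ, hlt⟩ := hno σ h1 h2
      exact ⟨i, hiσ, by omega⟩
    obtain ⟨rank, hinj, hcond⟩ := aux_rank G (fun i => d i) H Finset.univ
    have hinj' : Function.Injective rank := fun a b hab =>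
      hinj (by simp) (by simp) hab
    set O : Fin n → Fin n → Prop := fun a b => G.Adj a b ∧ rank b < rank a with hO
    have hor : IsOrientation G O := by
      refine ⟨fun u v h => h.1, fun u v hadj => ⟨fun h hc => absurd hc.2 (not_lt.2 h.2.le), ?_⟩⟩
      intro hn
      refine ⟨hadj, ?_⟩
      have h1 : ¬ rank u < rank v := fun hc => hn ⟨hadj.symm, hc⟩
      have h2 : rank u ≠ rank v := fun hc => hadj.ne (hinj' hc)
      omega
    have hlt : ∀ a b, Relation.TransGen O a b → rank b < rank a := by
      intro a b hab
      induction hab with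
      | single h => exact h.2
      | tail _ h ih => exact h.2.trans ih
    have hac : IsAcyclicRel O := fun v hv => lt_irrefl _ (hlt v v hv)
    obtain ⟨i, hi⟩ := h O hor hac
    have hd : d i ≤ outDeg O i := by
      refine (hcond i (Finset.mem_univ i)).trans (le_of_eq ?_)
      unfold outDeg
      congr 1
      ext j
      simp [hO]
    omega

/-- `T_G` is the intersection of the irreducible ideals
`⟨x_i ^ (outdeg_O(i)+1) : i ∈ [n]⟩` over acyclic orientations `O` of `G`. -/
theorem stmt6 (n : ℕ) (G : SimpleGraph (Fin n)) (hG : G.Connected)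
    (K : Type*) [Field K] :
    treeIdeal n G K =
      ⨅ O ∈ {O : Fin n → Fin n → Prop | IsOrientation G O ∧ IsAcyclicRel O},
        Ideal.span (Set.range fun i : Fin n =>
          (X i : MvPolynomial (Fin n) K) ^ (outDeg O i + 1)) := by
  ext p
  rw [mem_treeIdeal_iff]
  simp only [Ideal.mem_iInf, Set.mem_setOf_eq]
  constructor
  · intro h O hO
    rw [mem_orient_iff]
    intro d hd
    exact ((key_iff G d).1 (h d hd)) O hO.1 hO.2
  · intro h d hd
    refine (key_iff G d).2 ?_
    intro O hor hac
    exact (mem_orient_iff O p).1 (h O ⟨hor, hac⟩) d hd
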